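/- The principal congruence subgroup Γ(2) of SL(2,Z) is isomorphic to the direct product (Z/2) × F2, where the Z/2 factor is generated by -I and F2 is the free subgroup generated by [[1,2],[0,1]] and [[1,0],[2,1]]. -/

import Mathlib

/-- The matrix `[[1,2],[0,1]]` as an element of `SL(2,ℤ)`. -/
def f1 : Matrix.SpecialLinearGroup (Fin 2) ℤ :=
  ⟨!![1, 2; 0, 1], by norm_num [Matrix.det_fin_two_of]⟩

/-- The matrix `[[1,0],[2,1]]` as an element of `SL(2,ℤ)`. -/
def f2 : Matrix.SpecialLinearGroup (Fin 2) ℤ :=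
  ⟨!![1, 0; 2, 1], by norm_num [Matrix.det_fin_two_of]⟩

abbrev G := Matrix.SpecialLinearGroup (Fin 2) ℤ

lemma f1_coe : (f1 : Matrix (Fin 2) (Fin 2) ℤ) = !![1, 2; 0, 1] := rfl

lemma f1_zpow_coe (k : ℤ) : ((f1 ^ k : G) : Matrix (Fin 2) (Fin 2) ℤ) = !![1, 2*k; 0, 1] := by
  induction k using Int.induction_on with
  | zero => ext i j; fin_cases i <;> fin_cases j <;> simp
  | succ n ih => rw [zpow_add_one, Matrix.SpecialLinearGroup.coe_mul, ih, f1_coe]; ext i j; fin_cases i <;> fin_cases j <;>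
      simp [Matrix.mul_apply, Fin.sum_univ_two] <;> ring
  | pred n ih => rw [zpow_sub_one, Matrix.SpecialLinearGroup.coe_mul, ih, Matrix.SpecialLinearGroup.coe_inv, f1_coe]; ext i j; fin_cases i <;> fin_cases j <;>
      simp [Matrix.adjugate_fin_two_of, Matrix.mul_apply, Fin.sum_univ_two] <;> ring

lemma f1_zpow (k : ℤ) : (f1 ^ k : G) = ⟨!![1, 2*k; 0, 1], by norm_num [Matrix.det_fin_two_of]⟩ := by
  exact Subtype.ext (f1_zpow_coe k)

lemma f2_coe : (f2 : Matrix (Fin 2) (Fin 2) ℤ) = !![1, 0; 2, 1] := rfl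

lemma f2_zpow_coe (k : ℤ) : ((f2 ^ k : G) : Matrix (Fin 2) (Fin 2) ℤ) = !![1, 0; 2*k, 1] := by
  induction k using Int.induction_on with
  | zero => ext i j; fin_cases i <;> fin_cases j <;> simp
  | succ n ih => rw [zpow_add_one, Matrix.SpecialLinearGroup.coe_mul, ih, f2_coe]; ext i j; fin_cases i <;> fin_cases j <;>
      simp [Matrix.mul_apply, Fin.sum_univ_two] <;> ring
  | pred n ih => rw [zpow_sub_one, Matrix.SpecialLinearGroup.coe_mul, ih, Matrix.SpecialLinearGroup.coe_inv, f2_coe]; ext i j; fin_cases i <;> fin_cases j <;>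
      simp [Matrix.adjugate_fin_two_of, Matrix.mul_apply, Fin.sum_univ_two] <;> ring

lemma f2_zpow (k : ℤ) : (f2 ^ k : G) = ⟨!![1, 0; 2*k, 1], by norm_num [Matrix.det_fin_two_of]⟩ := by
  exact Subtype.ext (f2_zpow_coe k)

lemma neg_one_mem : (-1 : G) ∈ CongruenceSubgroup.Gamma 2 := by
  rw [CongruenceSubgroup.Gamma_mem]
  refine ⟨?_, ?_, ?_, ?_⟩ <;> simp <;> decide

lemma f1_mem : (f1 : G) ∈ CongruenceSubgroup.Gamma 2 := by
  rw [CongruenceSubgroup.Gamma_mem]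
  refine ⟨?_, ?_, ?_, ?_⟩ <;> simp [f1] <;> decide

lemma f2_mem : (f2 : G) ∈ CongruenceSubgroup.Gamma 2 := by
  rw [CongruenceSubgroup.Gamma_mem]
  refine ⟨?_, ?_, ?_, ?_⟩ <;> simp [f2] <;> decide

-- extraction of divisibility from Gamma 2 membership
example (A : G) (hA : A ∈ CongruenceSubgroup.Gamma 2) :
    (2:ℤ) ∣ (A.1 0 0 - 1) ∧ (2:ℤ) ∣ A.1 0 1 ∧ (2:ℤ) ∣ A.1 1 0 ∧ (2:ℤ) ∣ A.1 1 1 - 1 := by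
  rw [CongruenceSubgroup.Gamma_mem] at hA
  obtain ⟨h1, h2, h3, h4⟩ := hA
  refine ⟨?_, ?_, ?_, ?_⟩
  · have : ((A.1 0 0 - 1 : ℤ) : ZMod 2) = 0 := by push_cast [h1]; ring
    exact_mod_cast (ZMod.intCast_zmod_eq_zero_iff_dvd _ 2).mp this
  · exact_mod_cast (ZMod.intCast_zmod_eq_zero_iff_dvd _ 2).mp h2
  · exact_mod_cast (ZMod.intCast_zmod_eq_zero_iff_dvd _ 2).mp h3
  · have : ((A.1 1 1 - 1 : ℤ) : ZMod 2) = 0 := by push_cast [h4]; ring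
    exact_mod_cast (ZMod.intCast_zmod_eq_zero_iff_dvd _ 2).mp this

lemma exists_red_pos (x y : ℤ) (hy : 0 < y) (hpar : ¬ ((2:ℤ) ∣ x - y)) :
    ∃ k : ℤ, (x + 2*k*y).natAbs < y.natAbs := by
  have hd0 : 0 < 2*y := by omega
  have h1 : 2*y * (x / (2*y)) + x % (2*y) = x := Int.mul_ediv_add_emod x (2*y)
  have h2 : 0 ≤ x % (2*y) := Int.emod_nonneg x (by omega)
  have h3 : x % (2*y) < 2*y := Int.emod_lt_of_pos x hd0
  set r := x % (2*y) with hr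
  set q := x / (2*y) with hq
  have h1' : 2*(y*q) + r = x := by linear_combination h1
  have hr2 : (2:ℤ) ∣ x - r := ⟨y*q, by linarith⟩
  have hry : r ≠ y := by intro h; exact hpar (h ▸ hr2)
  by_cases hcase : r < y
  · refine ⟨-q, ?_⟩
    have : x + 2*(-q)*y = r := by linear_combination -h1
    omega
  · refine ⟨-q-1, ?_⟩
    have : x + 2*(-q-1)*y = r - 2*y := by linear_combination -h1
    omega

lemma exists_red (x y : ℤ) (hy : y ≠ 0) (hpar : ¬ ((2:ℤ) ∣ x - y)) :
    ∃ k : ℤ, (x + 2*k*y).natAbs < y.natAbs := by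
  rcases lt_or_gt_of_ne hy with h | h
  · obtain ⟨k, hk⟩ := exists_red_pos x (-y) (by omega) (by omega)
    refine ⟨-k, ?_⟩
    have : x + 2*(-k)*y = x + 2*k*(-y) := by ring
    rw [this]
    omega
  · exact exists_red_pos x y h hpar

lemma gammaTwo_dvd (A : G) (hA : A ∈ CongruenceSubgroup.Gamma 2) :
    (2:ℤ) ∣ (A.1 0 0 - 1) ∧ (2:ℤ) ∣ A.1 0 1 ∧ (2:ℤ) ∣ A.1 1 0 ∧ (2:ℤ) ∣ A.1 1 1 - 1 := by
  rw [CongruenceSubgroup.Gamma_mem] at hA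
  obtain ⟨h1, h2, h3, h4⟩ := hA
  refine ⟨?_, ?_, ?_, ?_⟩
  · have : ((A.1 0 0 - 1 : ℤ) : ZMod 2) = 0 := by push_cast [h1]; ring
    exact_mod_cast (ZMod.intCast_zmod_eq_zero_iff_dvd _ 2).mp this
  · exact_mod_cast (ZMod.intCast_zmod_eq_zero_iff_dvd _ 2).mp h2
  · exact_mod_cast (ZMod.intCast_zmod_eq_zero_iff_dvd _ 2).mp h3
  · have : ((A.1 1 1 - 1 : ℤ) : ZMod 2) = 0 := by push_cast [h4]; ring
    exact_mod_cast (ZMod.intCast_zmod_eq_zero_iff_dvd _ 2).mp this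

lemma coe_mul_entry (X A : G) (i j : Fin 2) :
    (X*A).1 i j = X.1 i 0 * A.1 0 j + X.1 i 1 * A.1 1 j := by
  simp [Matrix.SpecialLinearGroup.coe_mul, Matrix.mul_apply, Fin.sum_univ_two]

lemma det_entries (A : G) : A.1 0 0 * A.1 1 1 - A.1 0 1 * A.1 1 0 = 1 := by
  have := A.2
  rw [Matrix.det_fin_two] at this
  linarith

def H : Subgroup G := Subgroup.closure {(-1 : G), f1, f2}

lemma neg_one_mem_H : (-1 : G) ∈ H := Subgroup.subset_closure (by simp)
lemma f1_mem_H : f1 ∈ H := Subgroup.subset_closure (by simp)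
lemma f2_mem_H : f2 ∈ H := Subgroup.subset_closure (by simp)

lemma gamma_le_H : ∀ n : ℕ, ∀ A : G, A ∈ CongruenceSubgroup.Gamma 2 →
    (A.1 0 0).natAbs + (A.1 1 0).natAbs = n → A ∈ H := by
  intro n
  induction n using Nat.strong_induction_on with
  | _ n ih =>
  intro A hA hn
  obtain ⟨ha, hb, hc, hd⟩ := gammaTwo_dvd A hA
  have hdet := det_entries A
  by_cases hc0 : A.1 1 0 = 0
  · -- terminal case : upper triangular
    have had : A.1 0 0 * A.1 1 1 = 1 := by rw [hc0] at hdet; linarith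
    rcases Int.mul_eq_one_iff_eq_one_or_neg_one.mp had with ⟨h1, h2⟩ | ⟨h1, h2⟩
    · have hAeq : A = f1 ^ (A.1 0 1 / 2) := by
        rw [f1_zpow]
        apply Subtype.ext
        ext i j
        fin_cases i <;> fin_cases j <;> simp [h1, h2, hc0] <;> omega
      rw [hAeq]; exact Subgroup.zpow_mem _ f1_mem_H _
    · have hAeq : A = -1 * f1 ^ (-(A.1 0 1 / 2)) := by
        apply Matrix.SpecialLinearGroup.ext
        intro i j
        rw [Matrix.SpecialLinearGroup.coe_mul, Matrix.SpecialLinearGroup.coe_neg,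
          Matrix.SpecialLinearGroup.coe_one, f1_zpow_coe]
        fin_cases i <;> fin_cases j <;> simp [h1, h2, hc0] <;> omega
      rw [hAeq]
      exact Subgroup.mul_mem _ neg_one_mem_H (Subgroup.zpow_mem _ f1_mem_H _)
  · have ha0 : A.1 0 0 ≠ 0 := by omega
    have hne : (A.1 0 0).natAbs ≠ (A.1 1 0).natAbs := by omega
    rcases lt_or_gt_of_ne hne with h | h
    · -- |a| < |c| : reduce c using f2^k
      obtain ⟨k, hk⟩ := exists_red (A.1 1 0) (A.1 0 0) ha0 (by omega)
      have hB10 : (f2 ^ k * A).1 1 0 = A.1 1 0 + 2*k*A.1 0 0 := by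
        rw [coe_mul_entry, f2_zpow]; simp; try ring
      have hB00 : (f2 ^ k * A).1 0 0 = A.1 0 0 := by
        rw [coe_mul_entry, f2_zpow]; simp
      have hBmem : f2 ^ k * A ∈ CongruenceSubgroup.Gamma 2 :=
        Subgroup.mul_mem _ (Subgroup.zpow_mem _ f2_mem k) hA
      have hBH : f2 ^ k * A ∈ H := by
        refine ih _ ?_ _ hBmem rfl
        rw [hB10, hB00]
        omega
      have : A = (f2 ^ k)⁻¹ * (f2 ^ k * A) := by group
      rw [this]
      exact Subgroup.mul_mem _ (Subgroup.inv_mem _ (Subgroup.zpow_mem _ f2_mem_H k)) hBH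
    · -- |c| < |a| : reduce a using f1^k
      obtain ⟨k, hk⟩ := exists_red (A.1 0 0) (A.1 1 0) hc0 (by omega)
      have hB00 : (f1 ^ k * A).1 0 0 = A.1 0 0 + 2*k*A.1 1 0 := by
        rw [coe_mul_entry, f1_zpow]; simp; try ring
      have hB10 : (f1 ^ k * A).1 1 0 = A.1 1 0 := by
        rw [coe_mul_entry, f1_zpow]; simp
      have hBmem : f1 ^ k * A ∈ CongruenceSubgroup.Gamma 2 :=
        Subgroup.mul_mem _ (Subgroup.zpow_mem _ f1_mem k) hA
      have hBH : f1 ^ k * A ∈ H := by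
        refine ih _ ?_ _ hBmem rfl
        rw [hB10, hB00]
        omega
      have : A = (f1 ^ k)⁻¹ * (f1 ^ k * A) := by group
      rw [this]
      exact Subgroup.mul_mem _ (Subgroup.inv_mem _ (Subgroup.zpow_mem _ f1_mem_H k)) hBH

def g : Fin 2 → G := ![f1, f2]

def gen : Fin 2 × Bool → G := fun p => cond p.2 (g p.1) (g p.1)⁻¹

def sgn : Bool → ℤ := fun b => cond b 1 (-1)

lemma gen_fst_coe (b : Bool) : (gen (0, b)).1 = !![1, 2 * sgn b; 0, 1] := by
  cases b <;> simp [gen, sgn, g, f1_coe, Matrix.SpecialLinearGroup.coe_inv, Matrix.adjugate_fin_two_of]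

lemma gen_snd_coe (b : Bool) : (gen (1, b)).1 = !![1, 0; 2 * sgn b, 1] := by
  cases b <;> simp [gen, sgn, g, f2_coe, Matrix.SpecialLinearGroup.coe_inv, Matrix.adjugate_fin_two_of]

def SameSign (a c : ℤ) : Prop := (0 ≤ a ∧ 0 ≤ c) ∨ (a ≤ 0 ∧ c ≤ 0)

def PPInv (x : Fin 2) (b : Bool) (u : Fin 2 → ℤ) : Prop :=
  SameSign (u 0) (sgn b * u 1) ∧
    if x = 0 then (u 1).natAbs < (u 0).natAbs ∧ u 1 ≠ 0
    else (u 0).natAbs < (u 1).natAbs ∧ u 0 ≠ 0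

def wProd (L : List (Fin 2 × Bool)) : G := (L.map gen).prod

def v0 (p : Fin 2 × Bool) : Fin 2 → ℤ := if p.1 = 0 then ![0, 1] else ![1, 0]

def R (p q : Fin 2 × Bool) : Prop := p.1 = q.1 → p.2 = q.2

-- action of gen on a vector
lemma gen_fst_mulVec (b : Bool) (u : Fin 2 → ℤ) :
    (gen (0, b)).1.mulVec u = ![u 0 + 2 * sgn b * u 1, u 1] := by
  funext i
  fin_cases i <;> simp [gen_fst_coe, Matrix.mulVec, dotProduct, Fin.sum_univ_two] <;> ring

lemma gen_snd_mulVec (b : Bool) (u : Fin 2 → ℤ) :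
    (gen (1, b)).1.mulVec u = ![u 0, u 1 + 2 * sgn b * u 0] := by
  funext i
  fin_cases i <;> simp [gen_snd_coe, Matrix.mulVec, dotProduct, Fin.sum_univ_two] <;> ring

-- transition lemmas
lemma step_fst (b : Bool) (x' : Fin 2) (b' : Bool) (u : Fin 2 → ℤ)
    (hred : (0 : Fin 2) = x' → b = b') (hI : PPInv x' b' u) :
    PPInv 0 b (![u 0 + 2 * sgn b * u 1, u 1]) := by
  obtain ⟨hs, hI⟩ := hI
  fin_cases x' <;> simp_all [PPInv, SameSign, sgn] <;> cases b <;> cases b' <;>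
    simp_all <;> omega

lemma step_snd (b : Bool) (x' : Fin 2) (b' : Bool) (u : Fin 2 → ℤ)
    (hred : (1 : Fin 2) = x' → b = b') (hI : PPInv x' b' u) :
    PPInv 1 b (![u 0, u 1 + 2 * sgn b * u 0]) := by
  obtain ⟨hs, hI⟩ := hI
  fin_cases x' <;> simp_all [PPInv, SameSign, sgn] <;> cases b <;> cases b' <;>
    simp_all <;> omega

-- base cases
lemma base_fst (b : Bool) : PPInv 0 b ((gen (0,b)).1.mulVec (v0 (0,b))) := by
  rw [gen_fst_mulVec]
  cases b <;> simp [PPInv, SameSign, v0, sgn]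

lemma base_snd (b : Bool) : PPInv 1 b ((gen (1,b)).1.mulVec (v0 (1,b))) := by
  rw [gen_snd_mulVec]
  cases b <;> simp [PPInv, SameSign, v0, sgn]

lemma wProd_cons (p : Fin 2 × Bool) (L : List (Fin 2 × Bool)) :
    wProd (p :: L) = gen p * wProd L := by simp [wProd]

lemma key : ∀ L : List (Fin 2 × Bool), ∀ hL : L ≠ [], L.Chain' R →
    PPInv (L.head hL).1 (L.head hL).2 ((wProd L).1.mulVec (v0 (L.getLast hL))) := by
  intro L
  induction L with
  | nil => intro h; exact absurd rfl h
  | cons p L ih =>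
    intro _ hchain
    obtain ⟨x, b⟩ := p
    cases L with
    | nil =>
      simp only [List.head_cons, List.getLast_singleton]
      fin_cases x
      · simpa [wProd] using base_fst b
      · simpa [wProd] using base_snd b
    | cons q M =>
      have hq : (q :: M) ≠ [] := by simp
      have hchain' : (q :: M).Chain' R := hchain.tail
      have hR : R (x, b) q := (List.isChain_cons_cons.mp hchain).1
      have hIH := ih hq hchain'
      have hlast : ((x,b) :: q :: M).getLast (by simp) = (q :: M).getLast hq := by
        simp [List.getLast_cons]
      rw [hlast, wProd_cons]
      have hmv : ((gen (x,b) * wProd (q :: M)).1).mulVec (v0 ((q :: M).getLast hq)) =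
          (gen (x,b)).1.mulVec ((wProd (q :: M)).1.mulVec (v0 ((q :: M).getLast hq))) := by
        rw [Matrix.SpecialLinearGroup.coe_mul, ← Matrix.mulVec_mulVec]
      rw [hmv]
      set u := (wProd (q :: M)).1.mulVec (v0 ((q :: M).getLast hq)) with hu
      have hhead : (q :: M).head hq = q := rfl
      rw [hhead] at hIH
      simp only [List.head_cons]
      have hx : x = 0 ∨ x = 1 := by fin_cases x <;> simp
      rcases hx with rfl | rfl
      · rw [gen_fst_mulVec]
        exact step_fst b q.1 q.2 u (fun h => hR h) hIH
      · rw [gen_snd_mulVec]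
        exact step_snd b q.1 q.2 u (fun h => hR h) hIH

lemma chain'_of_nosub : ∀ L : List (Fin 2 × Bool),
    (∀ (L₁ : List (Fin 2 × Bool)) (x : Fin 2) (b : Bool) (L₂ : List (Fin 2 × Bool)),
      L ≠ L₁ ++ (x, b) :: (x, !b) :: L₂) → L.Chain' R := by
  intro L
  induction L with
  | nil => intro _; simp [List.Chain']
  | cons p L ih =>
    intro h
    cases L with
    | nil => simp [List.Chain']
    | cons q M =>
      obtain ⟨p1, p2⟩ := p
      obtain ⟨q1, q2⟩ := q
      rw [List.Chain', List.isChain_cons_cons]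
      constructor
      · intro hpq
        by_contra hb
        simp only at hpq hb
        subst hpq
        have hq2 : q2 = !p2 := by cases p2 <;> cases q2 <;> simp_all
        subst hq2
        exact h [] p1 p2 M (by simp)
      · exact ih (fun L₁ x b L₂ hEq => h ((p1,p2) :: L₁) x b L₂ (by rw [hEq]; simp))

lemma chain'_toWord (w : FreeGroup (Fin 2)) : w.toWord.Chain' R := by
  apply chain'_of_nosub
  intro L₁ x b L₂ hEq
  have h2 : FreeGroup.reduce w.toWord = L₁ ++ (x, b) :: (x, !b) :: L₂ := by
    rw [FreeGroup.reduce_toWord, hEq]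
  exact (FreeGroup.reduce.not (p := False) h2).elim

lemma lift_eq_wProd (w : FreeGroup (Fin 2)) : FreeGroup.lift g w = wProd w.toWord := by
  conv_lhs => rw [← FreeGroup.mk_toWord (x := w)]
  rw [FreeGroup.lift_mk]
  unfold wProd gen
  rfl

lemma one_ne_neg_one : (1 : G) ≠ -1 := by
  intro h
  have := congrArg (fun M : G => M.1 0 0) h
  simp at this

lemma lift_ne_pm (w : FreeGroup (Fin 2)) (hw : w ≠ 1) :
    FreeGroup.lift g w ≠ 1 ∧ FreeGroup.lift g w ≠ -1 := by
  have hnil : w.toWord ≠ [] := fun h => hw (FreeGroup.toWord_eq_nil_iff.mp h)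
  have hkey := key w.toWord hnil (chain'_toWord w)
  set u := (wProd w.toWord).1.mulVec (v0 (w.toWord.getLast hnil)) with hu
  have hu0 : u 0 ≠ 0 ∧ u 1 ≠ 0 := by
    obtain ⟨-, hI⟩ := hkey
    split at hI <;> omega
  have hv : v0 (w.toWord.getLast hnil) 0 = 0 ∨ v0 (w.toWord.getLast hnil) 1 = 0 := by
    unfold v0; split <;> simp
  rw [lift_eq_wProd]
  constructor
  · intro h1
    rw [h1] at hu
    simp only [Matrix.SpecialLinearGroup.coe_one, Matrix.one_mulVec] at hu
    rcases hv with h | h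
    · exact hu0.1 (by rw [hu]; exact h)
    · exact hu0.2 (by rw [hu]; exact h)
  · intro h1
    rw [h1] at hu
    have : u = -(v0 (w.toWord.getLast hnil)) := by
      rw [hu]
      rw [show ((-1 : G) : Matrix (Fin 2) (Fin 2) ℤ) = -1 by simp]
      rw [Matrix.neg_mulVec, Matrix.one_mulVec]
    rcases hv with h | h
    · exact hu0.1 (by rw [this]; simp [h])
    · exact hu0.2 (by rw [this]; simp [h])

lemma neg_one_commute (x : G) : Commute (-1 : G) x :=
  (neg_one_mul x).trans (mul_neg_one x).symm

lemma neg_one_pow_mod (n : ℕ) : (-1 : G) ^ n = (-1) ^ (n % 2) := by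
  conv_lhs => rw [← Nat.div_add_mod n 2]
  rw [pow_add, pow_mul, neg_one_sq, one_pow, one_mul]

def negHom : Multiplicative (ZMod 2) →* G where
  toFun ε := (-1 : G) ^ (Multiplicative.toAdd ε).val
  map_one' := by norm_num
  map_mul' a b := by
    simp only [toAdd_mul]
    rw [ZMod.val_add, ← pow_add, neg_one_pow_mod, neg_one_pow_mod ((Multiplicative.toAdd a).val + (Multiplicative.toAdd b).val)]
    congr 1
    omega

def Phi : Multiplicative (ZMod 2) × FreeGroup (Fin 2) →* G :=
  negHom.noncommCoprod (FreeGroup.lift g)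
    (fun m n => ((neg_one_commute (FreeGroup.lift g n)).pow_left _))

lemma Phi_apply (p : Multiplicative (ZMod 2) × FreeGroup (Fin 2)) :
    Phi p = negHom p.1 * FreeGroup.lift g p.2 := rfl

lemma negpow_val_one : (-1 : G) ^ (1 : ZMod 2).val = -1 := by
  rw [show (1 : ZMod 2).val = 1 from rfl, pow_one]

lemma negHom_one' : negHom (Multiplicative.ofAdd (1 : ZMod 2)) = -1 := negpow_val_one

lemma lift_mem_gamma (w : FreeGroup (Fin 2)) :
    FreeGroup.lift g w ∈ CongruenceSubgroup.Gamma 2 := by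
  have hr : (FreeGroup.lift g).range ≤ CongruenceSubgroup.Gamma 2 := by
    rw [FreeGroup.range_lift_eq_closure, Subgroup.closure_le]
    rintro _ ⟨i, rfl⟩
    fin_cases i
    · exact f1_mem
    · exact f2_mem
  exact hr ⟨w, rfl⟩

lemma Phi_mem (p : Multiplicative (ZMod 2) × FreeGroup (Fin 2)) :
    Phi p ∈ CongruenceSubgroup.Gamma 2 := by
  rw [Phi_apply]
  exact Subgroup.mul_mem _ (Subgroup.pow_mem _ neg_one_mem _) (lift_mem_gamma _)

def Phi' : Multiplicative (ZMod 2) × FreeGroup (Fin 2) →* CongruenceSubgroup.Gamma 2 :=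
  Phi.codRestrict _ Phi_mem

lemma negHom_cases (a : Multiplicative (ZMod 2)) :
    (negHom a = 1 ∧ a = 1) ∨ (negHom a = -1 ∧ a = Multiplicative.ofAdd 1) := by
  have hz : ∀ x : ZMod 2, x = 0 ∨ x = 1 := by decide
  have : (Multiplicative.toAdd a) = 0 ∨ (Multiplicative.toAdd a) = 1 := hz _
  rcases this with h | h
  · left
    constructor
    · show (-1 : G) ^ (Multiplicative.toAdd a).val = 1
      rw [h]; norm_num
    · rw [show a = Multiplicative.ofAdd (Multiplicative.toAdd a) from rfl, h]; rfl
  · right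
    constructor
    · show (-1 : G) ^ (Multiplicative.toAdd a).val = -1
      rw [h]; exact negpow_val_one
    · rw [show a = Multiplicative.ofAdd (Multiplicative.toAdd a) from rfl, h]

lemma Phi'_injective : Function.Injective Phi' := by
  rw [injective_iff_map_eq_one]
  rintro ⟨a, w⟩ h
  have h' : Phi (a, w) = 1 := by
    have := congrArg (Subtype.val) h
    exact this
  rw [Phi_apply] at h'
  rcases negHom_cases a with ⟨h1, h2⟩ | ⟨h1, h2⟩
  · rw [h1, one_mul] at h'
    have hw : w = 1 := by
      by_contra hw
      exact (lift_ne_pm w hw).1 h'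
    rw [h2, hw]; rfl
  · rw [h1] at h'
    have hlw : FreeGroup.lift g w = -1 := by
      have h2 : (-1 : G) * ((-1 : G) * FreeGroup.lift g w) = -1 * 1 := by rw [h']
      rw [← mul_assoc, neg_one_mul, neg_neg, one_mul, mul_one] at h2
      exact h2
    exfalso
    by_cases hw : w = 1
    · rw [hw, map_one] at hlw
      exact one_ne_neg_one hlw
    · exact (lift_ne_pm w hw).2 hlw

lemma Phi'_surjective : Function.Surjective Phi' := by
  rintro ⟨A, hA⟩
  have hH : A ∈ H := gamma_le_H _ A hA rfl
  have hle : H ≤ Phi.range := by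
    rw [H, Subgroup.closure_le]
    rintro x (rfl | rfl | rfl)
    · exact ⟨(Multiplicative.ofAdd 1, 1), by rw [Phi_apply, negHom_one', map_one, mul_one]⟩
    · exact ⟨(1, FreeGroup.of 0), by rw [Phi_apply, map_one, one_mul, FreeGroup.lift_apply_of]; rfl⟩
    · exact ⟨(1, FreeGroup.of 1), by rw [Phi_apply, map_one, one_mul, FreeGroup.lift_apply_of]; rfl⟩
  obtain ⟨p, hp⟩ := hle hH
  exact ⟨p, Subtype.ext hp⟩


/-- The principal congruence subgroup `Γ(2)` of `SL(2,ℤ)` is isomorphic to the direct product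
`(ℤ/2) × F₂`, where the `ℤ/2` factor is generated by `-I` and the free factor `F₂` is
the free subgroup generated by `[[1,2],[0,1]]` and `[[1,0],[2,1]]`. -/
theorem gamma_two_iso_zmod_two_prod_free :
    ∃ e : CongruenceSubgroup.Gamma 2 ≃* Multiplicative (ZMod 2) × FreeGroup (Fin 2),
      (∀ x : CongruenceSubgroup.Gamma 2,
        (x : Matrix.SpecialLinearGroup (Fin 2) ℤ) = -1 → e x = (Multiplicative.ofAdd 1, 1)) ∧
      (∀ x : CongruenceSubgroup.Gamma 2,
        (x : Matrix.SpecialLinearGroup (Fin 2) ℤ) = f1 → e x = (1, FreeGroup.of 0)) ∧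
      (∀ x : CongruenceSubgroup.Gamma 2,
        (x : Matrix.SpecialLinearGroup (Fin 2) ℤ) = f2 → e x = (1, FreeGroup.of 1)) := by
  have hbij : Function.Bijective Phi' := ⟨Phi'_injective, Phi'_surjective⟩
  refine ⟨(MulEquiv.ofBijective Phi' hbij).symm, ?_, ?_, ?_⟩
  · intro x hx
    rw [MulEquiv.symm_apply_eq]
    apply Subtype.ext
    show x.1 = Phi (Multiplicative.ofAdd 1, 1)
    rw [Phi_apply, negHom_one', map_one, mul_one, hx]
  · intro x hx
    rw [MulEquiv.symm_apply_eq]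
    apply Subtype.ext
    show x.1 = Phi (1, FreeGroup.of 0)
    rw [Phi_apply, map_one, one_mul, FreeGroup.lift_apply_of, hx]; rfl
  · intro x hx
    rw [MulEquiv.symm_apply_eq]
    apply Subtype.ext
    show x.1 = Phi (1, FreeGroup.of 1)
    rw [Phi_apply, map_one, one_mul, FreeGroup.lift_apply_of, hx]; rfl
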